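/- Define φ : ℝ → ℝ by φ(r) = (1/8)(3 − 2|r| + √(1 + 4|r| − 4r²)) for 0 ≤ |r| ≤ 1, φ(r) = (1/8)(5 − 2|r| − √(−7 + 12|r| − 4r²)) for 1 ≤ |r| ≤ 2, and φ(r) = 0 for |r| ≥ 2. Then for every r ∈ [0,1], one has φ(r) + φ(r − 2) = 1/2 and φ(r + 1) + φ(r − 1) = 1/2. In particular, for every r ∈ [0,1], φ(r+1) + φ(r) + φ(r−1) + φ(r−2) = 1, so the translates of φ by integers sum to 1 at every real number. -/
import Mathlib

/-- The Peskin four-point kernel. -/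
noncomputable def peskinPhi (r : ℝ) : ℝ :=
  if |r| ≤ 1 then (3 - 2 * |r| + Real.sqrt (1 + 4 * |r| - 4 * r ^ 2)) / 8
  else if |r| ≤ 2 then (5 - 2 * |r| - Real.sqrt (-7 + 12 * |r| - 4 * r ^ 2)) / 8
  else 0

lemma phi_low (x : ℝ) (h : |x| ≤ 1) :
    peskinPhi x = (3 - 2 * |x| + Real.sqrt (1 + 4 * |x| - 4 * x ^ 2)) / 8 := by
  simp [peskinPhi, h]

lemma phi_mid (x : ℝ) (h1 : 1 ≤ |x|) (h2 : |x| ≤ 2) :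
    peskinPhi x = (5 - 2 * |x| - Real.sqrt (-7 + 12 * |x| - 4 * x ^ 2)) / 8 := by
  rcases eq_or_lt_of_le h1 with h | h
  · have hx2 : x ^ 2 = 1 := by rw [← sq_abs, ← h]; norm_num
    rw [phi_low x h.ge, ← h, hx2]
    norm_num
  · rw [peskinPhi, if_neg (by linarith), if_pos h2]

lemma phi_zero (x : ℝ) (h : 2 ≤ |x|) : peskinPhi x = 0 := by
  rcases eq_or_lt_of_le h with h | h
  · have hx2 : x ^ 2 = 4 := by rw [← sq_abs, ← h]; norm_num
    rw [phi_mid x (by linarith) h.ge, ← h, hx2]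
    norm_num
  · rw [peskinPhi, if_neg (by linarith), if_neg (by linarith)]

lemma part1 : ∀ r ∈ Set.Icc (0:ℝ) 1, peskinPhi r + peskinPhi (r - 2) = 1 / 2 := by
  intro r ⟨h0, h1⟩
  have ha : |r| = r := abs_of_nonneg h0
  have hb : |r - 2| = 2 - r := by rw [abs_of_nonpos (by linarith)]; ring
  rw [phi_low r (by rw [ha]; exact h1), phi_mid (r - 2) (by rw [hb]; linarith) (by rw [hb]; linarith),
    ha, hb]
  have harg : (-7 + 12 * (2 - r) - 4 * (r - 2) ^ 2) = 1 + 4 * r - 4 * r ^ 2 := by ring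
  rw [harg]
  ring

lemma part2 : ∀ r ∈ Set.Icc (0:ℝ) 1, peskinPhi (r + 1) + peskinPhi (r - 1) = 1 / 2 := by
  intro r ⟨h0, h1⟩
  have ha : |r + 1| = r + 1 := abs_of_nonneg (by linarith)
  have hb : |r - 1| = 1 - r := by rw [abs_of_nonpos (by linarith)]; ring
  rw [phi_mid (r + 1) (by rw [ha]; linarith) (by rw [ha]; linarith),
    phi_low (r - 1) (by rw [hb]; linarith), ha, hb]
  have h1' : (-7 + 12 * (r + 1) - 4 * (r + 1) ^ 2) = 1 + 4 * r - 4 * r ^ 2 := by ring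
  have h2' : (1 + 4 * (1 - r) - 4 * (r - 1) ^ 2) = 1 + 4 * r - 4 * r ^ 2 := by ring
  rw [h1', h2']
  ring

lemma part3 : ∀ r ∈ Set.Icc (0:ℝ) 1,
    peskinPhi (r + 1) + peskinPhi r + peskinPhi (r - 1) + peskinPhi (r - 2) = 1 := by
  intro r hr
  have := part1 r hr
  have := part2 r hr
  linarith

theorem stmt2 :
    (∀ r ∈ Set.Icc (0:ℝ) 1, peskinPhi r + peskinPhi (r - 2) = 1 / 2) ∧
    (∀ r ∈ Set.Icc (0:ℝ) 1, peskinPhi (r + 1) + peskinPhi (r - 1) = 1 / 2) ∧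
    (∀ r ∈ Set.Icc (0:ℝ) 1,
      peskinPhi (r + 1) + peskinPhi r + peskinPhi (r - 1) + peskinPhi (r - 2) = 1) ∧
    (∀ x : ℝ, ∑' n : ℤ, peskinPhi (x - n) = 1) := by
  refine ⟨part1, part2, part3, ?_⟩
  intro x
  set m : ℤ := ⌊x⌋ with hm
  have hfl : (m : ℝ) ≤ x := Int.floor_le x
  have hfu : x < m + 1 := Int.lt_floor_add_one x
  set s : Finset ℤ := {m - 1, m, m + 1, m + 2} with hs
  have hzero : ∀ n : ℤ, n ∉ s → peskinPhi (x - n) = 0 := by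
    intro n hn
    simp only [hs, Finset.mem_insert, Finset.mem_singleton] at hn
    push_neg at hn
    apply phi_zero
    have : n ≤ m - 2 ∨ m + 3 ≤ n := by omega
    rcases this with h | h
    · have h' : (n:ℝ) ≤ (m:ℝ) - 2 := by exact_mod_cast h
      rw [abs_of_nonneg (by linarith)]; linarith
    · have h' : (m:ℝ) + 3 ≤ (n:ℝ) := by exact_mod_cast h
      rw [abs_of_nonpos (by linarith)]; linarith
  rw [tsum_eq_sum hzero]
  have hsum : ∑ n ∈ s, peskinPhi (x - n) =
      peskinPhi ((x - m) + 1) + peskinPhi (x - m) + peskinPhi ((x - m) - 1) + peskinPhi ((x - m) - 2) := by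
    rw [hs]
    rw [Finset.sum_insert (by simp only [Finset.mem_insert, Finset.mem_singleton]; omega),
      Finset.sum_insert (by simp only [Finset.mem_insert, Finset.mem_singleton]; omega),
      Finset.sum_insert (by simp only [Finset.mem_singleton]; omega), Finset.sum_singleton]
    push_cast
    ring_nf
  rw [hsum]
  exact part3 (x - m) ⟨by linarith, by linarith⟩
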